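/- Let α, γ, ξ, η, t ∈ ℝ with η > 0, let u(x,t) = 2η · sech(2η·A(x,t)) · exp(2i·((8η⁴γ − 48η²γξ² + 8ξ⁴γ − 12αη²ξ + 4αξ³ + η² − ξ²)t − ξx)) with A(x,t) = (32η²γξ − 32γξ³ + 4αη² − 12αξ² + 2ξ)t + x, and let b ∈ ℝ with 0 < b < 4η². Then the set {x ∈ ℝ : |u(x,t)|² = b} consists of exactly two points x₁ > x₂, and the width x₁ − x₂ equals (1/(4η))·log((8η² − b + 4·√(4η⁴ − bη²))/(8η² − b − 4·√(4η⁴ − bη²))); in particular the width depends only on η and b and is independent of α, γ, ξ and t. -/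

import Mathlib

open Complex

/-- The level set `{x : |u(x,t)|² = b}` of the single soliton at fixed time `t`
consists of exactly two points, whose distance (the soliton width) is
`(1/(4η)) log((8η²-b+4√(4η⁴-bη²))/(8η²-b-4√(4η⁴-bη²)))`, depending only on `η` and `b`. -/
theorem single_soliton_width
    (α γ ξ η t : ℝ) (hη : 0 < η)
    (A : ℝ → ℝ → ℝ)
    (hA : ∀ x t, A x t = (32 * η ^ 2 * γ * ξ - 32 * γ * ξ ^ 3 + 4 * α * η ^ 2
        - 12 * α * ξ ^ 2 + 2 * ξ) * t + x)
    (u : ℝ → ℝ → ℂ)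
    (hu : ∀ x t, u x t = ((2 * η * (Real.cosh (2 * η * A x t))⁻¹ : ℝ) : ℂ)
        * Complex.exp (2 * Complex.I *
          (((8 * η ^ 4 * γ - 48 * η ^ 2 * γ * ξ ^ 2 + 8 * ξ ^ 4 * γ - 12 * α * η ^ 2 * ξ
            + 4 * α * ξ ^ 3 + η ^ 2 - ξ ^ 2) * t - ξ * x : ℝ) : ℂ)))
    (b : ℝ) (hb0 : 0 < b) (hb4 : b < 4 * η ^ 2) :
    ∃ x₁ x₂ : ℝ, x₂ < x₁
      ∧ {x : ℝ | ‖u x t‖ ^ 2 = b} = {x₁, x₂}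
      ∧ x₁ - x₂ = (1 / (4 * η)) * Real.log
          ((8 * η ^ 2 - b + 4 * Real.sqrt (4 * η ^ 4 - b * η ^ 2))
            / (8 * η ^ 2 - b - 4 * Real.sqrt (4 * η ^ 4 - b * η ^ 2))) := by
  set c : ℝ := 32 * η ^ 2 * γ * ξ - 32 * γ * ξ ^ 3 + 4 * α * η ^ 2
      - 12 * α * ξ ^ 2 + 2 * ξ with hc
  clear hc
  have hb' : 0 < 4 * η ^ 2 - b := by linarith
  set s := Real.sqrt (4 * η ^ 2 - b) with hs
  have hs0 : 0 < s := Real.sqrt_pos.2 hb'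
  have hs2 : s ^ 2 = 4 * η ^ 2 - b := Real.sq_sqrt hb'.le
  have hslt : s < 2 * η := by nlinarith
  set sb := Real.sqrt b with hsb
  have hsb0 : 0 < sb := Real.sqrt_pos.2 hb0
  have hsb2 : sb ^ 2 = b := Real.sq_sqrt hb0.le
  set p := (2 * η + s) / sb with hp
  have hp1 : 1 < p := by
    rw [hp, lt_div_iff₀ hsb0]
    nlinarith
  have hp0 : 0 < p := lt_trans one_pos hp1
  have hpinv : (2 * η - s) / sb = p⁻¹ := by
    rw [hp, inv_div, div_eq_div_iff hsb0.ne' (by positivity : (2 * η + s) ≠ 0)]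
    linear_combination -hs2 - hsb2
  have hlogp : 0 < Real.log p := Real.log_pos hp1
  have hη2 : (2 : ℝ) * η ≠ 0 := by positivity
  -- the modulus squared
  have habs : ∀ x, ‖u x t‖ ^ 2
      = (2 * η) ^ 2 / (Real.cosh (2 * η * A x t)) ^ 2 := by
    intro x
    have hcosh : 0 < Real.cosh (2 * η * A x t) := Real.cosh_pos _
    rw [hu, norm_mul, Complex.norm_real, Real.norm_eq_abs, Complex.norm_exp]
    have h0 : (2 * Complex.I * (((8 * η ^ 4 * γ - 48 * η ^ 2 * γ * ξ ^ 2 + 8 * ξ ^ 4 * γ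
        - 12 * α * η ^ 2 * ξ + 4 * α * ξ ^ 3 + η ^ 2 - ξ ^ 2) * t - ξ * x : ℝ) : ℂ)).re = 0 := by
      generalize ((8 * η ^ 4 * γ - 48 * η ^ 2 * γ * ξ ^ 2 + 8 * ξ ^ 4 * γ
        - 12 * α * η ^ 2 * ξ + 4 * α * ξ ^ 3 + η ^ 2 - ξ ^ 2) * t - ξ * x : ℝ) = r
      simp
    rw [h0, Real.exp_zero, mul_one, abs_of_pos (by positivity)]
    field_simp
  -- reduce the level-set equation to an equation on `cosh`
  have hkey : ∀ x : ℝ, ‖u x t‖ ^ 2 = b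
      ↔ Real.cosh (2 * η * A x t) = 2 * η / sb := by
    intro x
    rw [habs x]
    have hcosh : 0 < Real.cosh (2 * η * A x t) := Real.cosh_pos _
    set C := Real.cosh (2 * η * A x t) with hC
    constructor
    · intro h
      have h2 : b * C ^ 2 = (2 * η) ^ 2 := by
        field_simp at h
        linarith
      have h3 : (C * sb - 2 * η) * (C * sb + 2 * η) = 0 := by
        linear_combination C ^ 2 * hsb2 + h2
      have h4 : C * sb = 2 * η := by
        rcases mul_eq_zero.1 h3 with h' | h'
        · linarith
        · nlinarith
      rw [eq_div_iff hsb0.ne']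
      exact h4
    · intro h
      rw [h]
      field_simp
      nlinarith
  -- solve `cosh y = 2η/sb`
  have hcosh_iff : ∀ y : ℝ, Real.cosh y = 2 * η / sb
      ↔ (y = Real.log p ∨ y = -Real.log p) := by
    intro y
    have hpp : p + p⁻¹ = 4 * η / sb := by
      rw [← hpinv, hp, ← add_div]
      ring_nf
    have hppp : p * p⁻¹ = 1 := mul_inv_cancel₀ hp0.ne'
    constructor
    · intro h
      have he : 0 < Real.exp y := Real.exp_pos y
      have hsum : Real.exp y + (Real.exp y)⁻¹ = 2 * (2 * η / sb) := by
        rw [Real.cosh_eq] at h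
        rw [← Real.exp_neg]
        linarith
      have h1 : Real.exp y * (Real.exp y)⁻¹ = 1 := mul_inv_cancel₀ he.ne'
      have hmul : Real.exp y * (Real.exp y + (Real.exp y)⁻¹)
          = Real.exp y * (2 * (2 * η / sb)) := by rw [hsum]
      have hquad : (Real.exp y - p) * (Real.exp y - p⁻¹) = 0 := by
        linear_combination hmul - h1 - Real.exp y * hpp + hppp
      rcases mul_eq_zero.1 hquad with h' | h'
      · left
        have : Real.exp y = p := by linarith
        rw [← Real.log_exp y, this]
      · right
        have : Real.exp y = p⁻¹ := by linarith
        rw [← Real.log_exp y, this, Real.log_inv]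
    · intro h
      have hco : Real.cosh (Real.log p) = 2 * η / sb := by
        rw [Real.cosh_eq, Real.exp_log hp0, Real.exp_neg, Real.exp_log hp0, hpp]
        ring
      rcases h with h | h
      · rw [h]; exact hco
      · rw [h, Real.cosh_neg]; exact hco
  -- the two solution points
  refine ⟨Real.log p / (2 * η) - c * t, -(Real.log p / (2 * η)) - c * t, by
      have : 0 < Real.log p / (2 * η) := by positivity
      linarith, ?_, ?_⟩
  · ext x
    simp only [Set.mem_setOf_eq, Set.mem_insert_iff, Set.mem_singleton_iff]
    rw [hkey x, hcosh_iff, hA]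
    constructor
    · rintro (h | h)
      · left
        field_simp
        linear_combination h
      · right
        field_simp
        linear_combination h
    · rintro (h | h)
      · left
        rw [h]
        field_simp
        ring
      · right
        rw [h]
        field_simp
        ring
  · -- the width formula
    have hx : Real.log p / (2 * η) - c * t - (-(Real.log p / (2 * η)) - c * t)
        = Real.log p / η := by
      field_simp
      ring
    rw [hx]
    have hsq : Real.sqrt (4 * η ^ 4 - b * η ^ 2) = η * s := by
      rw [show 4 * η ^ 4 - b * η ^ 2 = (η * s) ^ 2 by linear_combination (-η ^ 2) * hs2]
      exact Real.sqrt_sq (by positivity)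
    rw [hsq]
    have hN : 8 * η ^ 2 - b + 4 * (η * s) = (2 * η + s) ^ 2 := by linear_combination -hs2
    have hD : 8 * η ^ 2 - b - 4 * (η * s) = (2 * η - s) ^ 2 := by linear_combination -hs2
    rw [hN, hD]
    have hquot : (2 * η + s) ^ 2 / (2 * η - s) ^ 2 = p ^ 4 := by
      have h1 : (2 * η + s) * (2 * η - s) = sb ^ 2 := by linear_combination -hs2 - hsb2
      have hd0 : (0:ℝ) < 2 * η - s := by linarith
      rw [hp, div_pow, div_eq_div_iff (pow_pos hd0 2).ne' (pow_pos hsb0 4).ne']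
      linear_combination (-(2 * η + s) ^ 2 * ((2 * η + s) * (2 * η - s) + sb ^ 2)) * h1
    rw [hquot, Real.log_pow]
    push_cast
    field_simp
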